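/- Let K be a DAG representation of a Σ-context and G a Σ-DAG. Then unfold(K[G]) = unfold(K)[unfold(G)], i.e., unfolding commutes with concatenation of a context-DAG and a tree-DAG. -/

import Mathlib

/-- Labelled ordered trees (trees whose nodes carry labels and ordered lists of
children; for a ranked alphabet the rank condition is imposed as a hypothesis). -/
inductive LTree (L : Type) : Type
  | node : L → List (LTree L) → LTree L

/-- A rooted labelled ordered DAG; acyclicity is expressed by well-foundedness
of the child relation. -/
structure LDag (L : Type) where
  V : Type
  root : V
  label : V → L
  succ : V → List V
  wf : WellFounded (fun u v => u ∈ succ v)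

/-- Unfolding of (the sub-DAG rooted at) a node of a DAG into a tree. -/
noncomputable def LDag.unfoldFrom {L : Type} (D : LDag L) : D.V → LTree L :=
  D.wf.fix fun v ih => LTree.node (D.label v) ((D.succ v).attach.map fun u => ih u.1 u.2)

/-- The unfolding of a DAG. -/
noncomputable def LDag.unfold {L : Type} (D : LDag L) : LTree L :=
  D.unfoldFrom D.root

/-- Substituting a Σ-tree for the hole `□` (represented by the label `none`) in a
tree over `Σ ∪ {□}`; on trees with exactly one occurrence of `none` this is the
concatenation `c[t]` of a context and a tree. -/
def substHole {Sg : Type} (g : LTree Sg) : LTree (Option Sg) → LTree Sg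
  | .node none _ => g
  | .node (some σ) ts => .node σ (ts.attach.map fun t => substHole g t.1)
decreasing_by
  have := List.sizeOf_lt_of_mem t.2
  simp only [LTree.node.sizeOf_spec]
  omega

/-- The number of occurrences of the hole `□` (label `none`) in a tree over
`Σ ∪ {□}`; a tree represents a Σ-context iff this number is `1`. -/
def holeCount {Sg : Type} : LTree (Option Sg) → ℕ
  | .node a ts => (match a with | none => 1 | some _ => 0) + (ts.attach.map fun t => holeCount t.1).sum
decreasing_by
  have := List.sizeOf_lt_of_mem t.2
  simp only [LTree.node.sizeOf_spec]
  omega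

/-- The concatenation `K[G]` of a DAG `K` representing a Σ-context and a Σ-DAG
`G`: the root of `G` is substituted for the `□`-labelled node(s) of `K`, i.e.
every edge into a `□`-labelled node is redirected to the root of `G` (the
`□`-labelled nodes themselves become unreachable junk). -/
def LDag.concat {Sg : Type} [DecidableEq Sg] (K : LDag (Option Sg)) (G : LDag Sg) :
    LDag Sg where
  V := G.V ⊕ K.V
  root := if K.label K.root = none then .inl G.root else .inr K.root
  label := fun v =>
    match v with
    | .inl a => G.label a
    | .inr b => (K.label b).getD (G.label G.root)
  succ := fun v =>
    match v with
    | .inl a => (G.succ a).map .inl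
    | .inr b =>
      match K.label b with
      | none => []
      | some _ => (K.succ b).map fun u =>
          if K.label u = none then .inl G.root else .inr u
  wf := by
    apply Subrelation.wf
      (r := Sum.Lex (fun u v => u ∈ G.succ v) (fun u v => u ∈ K.succ v))
    · intro u v h
      match v with
      | .inl a =>
        simp only [List.mem_map] at h
        obtain ⟨u', hu', rfl⟩ := h
        exact Sum.Lex.inl hu'
      | .inr b =>
        cases hb : K.label b with
        | none => simp [hb] at h
        | some σ =>
          simp only [hb, List.mem_map] at h
          obtain ⟨u', hu', rfl⟩ := h
          split
          · exact Sum.Lex.sep _ _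
          · exact Sum.Lex.inr hu'
    · exact Sum.lex_wf G.wf K.wf

theorem pmap_pmap' {α β γ : Type*} {p : α → Prop} {q : β → Prop}
    (f : ∀ a, p a → β) (g : ∀ b, q b → γ) (hq : ∀ a (h : p a), q (f a h)) :
    ∀ (l : List α) (H : ∀ a ∈ l, p a) (H' : ∀ b ∈ l.pmap f H, q b),
    (l.pmap f H).pmap g H' = l.pmap (fun a h => g (f a h) (hq a h)) H := by
  intro l
  induction l with
  | nil => intros; rfl
  | cons x xs ih => intro H H'; simp [List.pmap, ih]

theorem LDag.unfoldFrom_eq {L : Type} (D : LDag L) (v : D.V) :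
    D.unfoldFrom v = LTree.node (D.label v)
      ((D.succ v).attach.map fun u => D.unfoldFrom u.1) := by
  unfold LDag.unfoldFrom
  exact D.wf.fix_eq _ v

theorem unfoldFrom_inl {Sg : Type} [DecidableEq Sg] (K : LDag (Option Sg)) (G : LDag Sg)
    (a : G.V) : (K.concat G).unfoldFrom (Sum.inl a) = G.unfoldFrom a := by
  induction a using G.wf.induction with
  | _ a ih =>
    rw [LDag.unfoldFrom_eq]; refine ((K.concat G).unfoldFrom_eq (Sum.inl a)).trans ?_
    show LTree.node (G.label a) _ = _
    congr 1
    have : (K.concat G).succ (Sum.inl a) = (G.succ a).map Sum.inl := rfl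
    rw [this]
    erw [List.map_attach_eq_pmap, List.pmap_map, List.map_attach_eq_pmap]
    exact List.pmap_congr_left _ fun u hu _ _ => ih u hu

theorem unfoldFrom_inr {Sg : Type} [DecidableEq Sg] (K : LDag (Option Sg)) (G : LDag Sg)
    (b : K.V) :
    (if K.label b = none then G.unfold else (K.concat G).unfoldFrom (Sum.inr b))
      = substHole G.unfold (K.unfoldFrom b) := by
  induction b using K.wf.induction with
  | _ b ih =>
    rw [LDag.unfoldFrom_eq K b]
    cases hb : K.label b with
    | none => simp [substHole]
    | some σ =>
      simp only [hb, Option.some.injEq, reduceCtorEq, if_false]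
      refine ((K.concat G).unfoldFrom_eq (Sum.inr b)).trans ?_
      show LTree.node ((K.label b).getD _) _ = _
      rw [hb]
      rw [substHole]
      congr 1
      have hsucc : (K.concat G).succ (Sum.inr b)
          = (K.succ b).map fun u => if K.label u = none then Sum.inl G.root else Sum.inr u := by
        show (match K.label b with
          | none => []
          | some _ => (K.succ b).map fun u =>
              if K.label u = none then Sum.inl G.root else Sum.inr u) = _
        rw [hb]
      rw [hsucc]; erw [List.map_attach_eq_pmap, List.pmap_map, List.map_attach_eq_pmap, List.map_attach_eq_pmap,
        pmap_pmap' _ _ (fun a h => List.mem_pmap.2 ⟨a, h, rfl⟩)]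
      refine List.pmap_congr_left _ fun u hu _ _ => ?_
      rw [← ih u hu]
      by_cases hu' : K.label u = none
      · simp only [hu', if_true]
        exact unfoldFrom_inl K G G.root
      · simp only [hu', if_false]

/-- unfolding commutes with concatenation:
`unfold(K[G]) = unfold(K)[unfold(G)]`, for a DAG `K` representing a Σ-context
(its unfolding has exactly one hole) and a Σ-DAG `G` (with ranks respected). -/
theorem unfold_concat {Sg : Type} [DecidableEq Sg] (rk : Sg → ℕ)
    (K : LDag (Option Sg)) (G : LDag Sg)
    (hKrk : ∀ v, (K.succ v).length = (K.label v).elim 0 rk)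
    (hGrk : ∀ v, (G.succ v).length = rk (G.label v))
    (hctx : holeCount K.unfold = 1) :
    (K.concat G).unfold = substHole G.unfold K.unfold := by
  unfold LDag.unfold
  have h := unfoldFrom_inr K G K.root
  by_cases hr : K.label K.root = none
  · simp only [hr, if_true] at h
    have hroot : (K.concat G).root = Sum.inl G.root := by
      show (if K.label K.root = none then _ else _) = _
      exact if_pos hr
    rw [hroot, unfoldFrom_inl]
    exact h
  · simp only [hr, if_false] at h
    have hroot : (K.concat G).root = Sum.inr K.root := by
      show (if K.label K.root = none then _ else _) = _
      exact if_neg hr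
    rw [hroot]
    exact h
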